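/- Let A be the 4th-order 2-dimensional real tensor with all entries zero except A_{1111} = 25.1, A_{1212} = 25.6, A_{2121} = 24.8, A_{2222} = 23. Then the set of real Z-eigenvalues of A is exactly {23, 25.1}, with Z-eigenvectors ±(0,1) for 23 and ±(1,0) for 25.1. -/
import Mathlib
open Finset
noncomputable def app3 (A : Fin 2 → Fin 2 → Fin 2 → Fin 2 → ℝ) (x : Fin 2 → ℝ) :
    Fin 2 → ℝ :=
  fun j => ∑ a : Fin 2, ∑ b : Fin 2, ∑ c : Fin 2, A j a b c * x a * x b * x c
noncomputable def C0 : Fin 2 → Fin 2 → Fin 2 → Fin 2 → ℝ := fun i j k l =>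
  if (i, j, k, l) = (0, 0, 0, 0) then 25.1
  else if (i, j, k, l) = (0, 1, 0, 1) then 25.6
  else if (i, j, k, l) = (1, 0, 1, 0) then 24.8
  else if (i, j, k, l) = (1, 1, 1, 1) then 23
  else 0

lemma app0 (u : Fin 2 → ℝ) : app3 C0 u 0 = 25.1*u 0^3 + 25.6*u 0*u 1^2 := by
  simp [app3, C0, Fin.sum_univ_two]; norm_num; ring

lemma app1 (u : Fin 2 → ℝ) : app3 C0 u 1 = 24.8*u 0^2*u 1 + 23*u 1^3 := by
  simp [app3, C0, Fin.sum_univ_two]; norm_num; ring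

lemma part2 (u : Fin 2 → ℝ) :
    (u 0 ^ 2 + u 1 ^ 2 = 1 ∧ ∀ j, app3 C0 u j = 23 * u j) ↔
      (u = ![0, 1] ∨ u = ![0, -1]) := by
  constructor
  · rintro ⟨hn, he⟩
    have e0 := he 0; rw [app0] at e0
    have h0 : u 0 = 0 := by nlinarith [sq_nonneg (u 0), sq_nonneg (u 1), sq_nonneg (u 0 * u 1)]
    have h1 : u 1 = 1 ∨ u 1 = -1 := by
      have hf : (u 1 - 1) * (u 1 + 1) = 0 := by nlinarith
      rcases mul_eq_zero.mp hf with h | h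
      · left; linarith
      · right; linarith
    rcases h1 with h1 | h1
    · left; funext j; fin_cases j <;> simp [h0, h1]
    · right; funext j; fin_cases j <;> simp [h0, h1]
  · rintro (rfl | rfl) <;>
      refine ⟨by norm_num, fun j => ?_⟩ <;> fin_cases j <;>
      · first
        | (rw [show ((⟨0, by norm_num⟩ : Fin 2)) = 0 from rfl, app0]; norm_num)
        | (rw [show ((⟨1, by norm_num⟩ : Fin 2)) = 1 from rfl, app1]; norm_num)

lemma part3 (u : Fin 2 → ℝ) :
    (u 0 ^ 2 + u 1 ^ 2 = 1 ∧ ∀ j, app3 C0 u j = 25.1 * u j) ↔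
      (u = ![1, 0] ∨ u = ![-1, 0]) := by
  constructor
  · rintro ⟨hn, he⟩
    have e1 := he 1; rw [app1] at e1
    have h1 : u 1 = 0 := by nlinarith [sq_nonneg (u 0), sq_nonneg (u 1), sq_nonneg (u 0 * u 1)]
    have h0 : u 0 = 1 ∨ u 0 = -1 := by
      have hf : (u 0 - 1) * (u 0 + 1) = 0 := by nlinarith
      rcases mul_eq_zero.mp hf with h | h
      · left; linarith
      · right; linarith
    rcases h0 with h0 | h0
    · left; funext j; fin_cases j <;> simp [h0, h1]
    · right; funext j; fin_cases j <;> simp [h0, h1]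
  · rintro (rfl | rfl) <;>
      refine ⟨by norm_num, fun j => ?_⟩ <;> fin_cases j <;>
      · first
        | (rw [show ((⟨0, by norm_num⟩ : Fin 2)) = 0 from rfl, app0]; norm_num)
        | (rw [show ((⟨1, by norm_num⟩ : Fin 2)) = 1 from rfl, app1]; norm_num)

/-- The set of real Z-eigenvalues of `C0` is exactly `{23, 25.1}`, with Z-eigenvectors
`±(0,1)` for `23` and `±(1,0)` for `25.1`. -/
theorem stmt15 :
    ({lam : ℝ | ∃ u : Fin 2 → ℝ,
        u 0 ^ 2 + u 1 ^ 2 = 1 ∧ ∀ j, app3 C0 u j = lam * u j} = {23, 25.1}) ∧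
    (∀ u : Fin 2 → ℝ,
      (u 0 ^ 2 + u 1 ^ 2 = 1 ∧ ∀ j, app3 C0 u j = 23 * u j) ↔
        (u = ![0, 1] ∨ u = ![0, -1])) ∧
    (∀ u : Fin 2 → ℝ,
      (u 0 ^ 2 + u 1 ^ 2 = 1 ∧ ∀ j, app3 C0 u j = 25.1 * u j) ↔
        (u = ![1, 0] ∨ u = ![-1, 0])) := by
  refine ⟨?_, part2, part3⟩
  ext lam
  simp only [Set.mem_setOf_eq, Set.mem_insert_iff, Set.mem_singleton_iff]
  constructor
  · rintro ⟨u, hn, he⟩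
    have e0 := he 0; rw [app0] at e0
    have e1 := he 1; rw [app1] at e1
    by_cases h0 : u 0 = 0
    · left
      have h1 : u 1 ^ 2 = 1 := by nlinarith
      have hu1 : u 1 ≠ 0 := by intro h; rw [h] at h1; norm_num at h1
      have : 23 * u 1 ^ 3 = lam * u 1 := by rw [← e1, h0]; ring
      have : (23 * u 1 ^ 2 - lam) * u 1 = 0 := by linear_combination this
      rcases mul_eq_zero.mp this with h | h
      · nlinarith
      · exact absurd h hu1
    · by_cases h1 : u 1 = 0
      · right
        have hu0 : u 0 ^ 2 = 1 := by nlinarith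
        have : (25.1 * u 0 ^ 2 - lam) * u 0 = 0 := by
          linear_combination e0 - (25.6 * u 0 * u 1) * h1
        rcases mul_eq_zero.mp this with h | h
        · nlinarith
        · exact absurd h h0
      · exfalso
        have l0 : lam = 25.1 * u 0 ^ 2 + 25.6 * u 1 ^ 2 := by
          have : (25.1 * u 0 ^ 2 + 25.6 * u 1 ^ 2 - lam) * u 0 = 0 := by linear_combination e0
          rcases mul_eq_zero.mp this with h | h
          · linarith
          · exact absurd h h0
        have l1 : lam = 24.8 * u 0 ^ 2 + 23 * u 1 ^ 2 := by
          have : (24.8 * u 0 ^ 2 + 23 * u 1 ^ 2 - lam) * u 1 = 0 := by linear_combination e1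
          rcases mul_eq_zero.mp this with h | h
          · linarith
          · exact absurd h h1
        have hp0 : u 0 ^ 2 > 0 := by positivity
        have hp1 : u 1 ^ 2 > 0 := by positivity
        nlinarith
  · rintro (rfl | rfl)
    · exact ⟨![0, 1], ((part2 ![0,1]).mpr (Or.inl rfl))⟩
    · exact ⟨![1, 0], ((part3 ![1,0]).mpr (Or.inl rfl))⟩
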